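/- Under the assumptions of the reservoir update (φ L_φ-Lipschitz with L_φ ≤ 1, ‖W_r‖ ≤ α < 1, λ ∈ (0,1], κ = (1−λ)+λαL_φ), if two input sequences differ only at time t−τ, then ‖h^{(1)}_t − h^{(2)}_t‖ ≤ λ‖W_in‖·‖x^{(1)}_{t−τ} − x^{(2)}_{t−τ}‖·κ^{τ−1}. -/
import Mathlib


/-- If two input sequences differ only at time t − τ (τ ≥ 1) and the trajectories start
from the same initial state, then
‖h¹_t − h²_t‖ ≤ λ‖W_in‖·‖x¹_{t−τ} − x²_{t−τ}‖·κ^{τ−1} with κ = (1−λ)+λαL_φ. -/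
theorem reservoir_fading_memory
    {N d : ℕ}
    (lam α Lphi : ℝ) (hlam : 0 < lam) (hlam1 : lam ≤ 1)
    (hα0 : 0 ≤ α) (hα1 : α < 1) (hL0 : 0 ≤ Lphi) (hL1 : Lphi ≤ 1)
    (Wr : EuclideanSpace ℝ (Fin N) →L[ℝ] EuclideanSpace ℝ (Fin N))
    (hWr : ‖Wr‖ ≤ α)
    (Win : EuclideanSpace ℝ (Fin d) →L[ℝ] EuclideanSpace ℝ (Fin N))
    (b : EuclideanSpace ℝ (Fin N))
    (φ : EuclideanSpace ℝ (Fin N) → EuclideanSpace ℝ (Fin N))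
    (hφ : ∀ u v, ‖φ u - φ v‖ ≤ Lphi * ‖u - v‖)
    (x₁ x₂ : ℕ → EuclideanSpace ℝ (Fin d))
    (h₁ h₂ : ℕ → EuclideanSpace ℝ (Fin N))
    (hupd₁ : ∀ t, h₁ (t + 1) = (1 - lam) • h₁ t + lam • φ (Wr (h₁ t) + Win (x₁ t) + b))
    (hupd₂ : ∀ t, h₂ (t + 1) = (1 - lam) • h₂ t + lam • φ (Wr (h₂ t) + Win (x₂ t) + b))
    (h0 : h₁ 0 = h₂ 0)
    (t τ : ℕ) (hτ1 : 1 ≤ τ) (hτt : τ ≤ t)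
    (hx : ∀ u, u ≠ t - τ → x₁ u = x₂ u) :
    ‖h₁ t - h₂ t‖ ≤
      lam * ‖Win‖ * ‖x₁ (t - τ) - x₂ (t - τ)‖ *
        ((1 - lam) + lam * α * Lphi) ^ (τ - 1) := by
  set s := t - τ with hs
  set κ := (1 - lam) + lam * α * Lphi with hκ
  have hκ0 : 0 ≤ κ := by
    have hp : 0 ≤ lam * α * Lphi := by positivity
    rw [hκ]; linarith
  set B := lam * ‖Win‖ * ‖x₁ s - x₂ s‖ with hB
  have hB0 : 0 ≤ B := by
    have := norm_nonneg Win
    have := norm_nonneg (x₁ s - x₂ s)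
    positivity
  -- trajectories agree up to time s
  have hEq : ∀ u, u ≤ s → h₁ u = h₂ u := by
    intro u hu
    induction u with
    | zero => exact h0
    | succ n ih =>
      have hn : n ≤ s := Nat.le_of_succ_le hu
      have hne : n ≠ s := by omega
      rw [hupd₁, hupd₂, ih hn, hx n hne]
  -- single perturbation step
  have hstep1 : ‖h₁ (s + 1) - h₂ (s + 1)‖ ≤ B := by
    rw [hupd₁, hupd₂, hEq s le_rfl]
    have hd : (1 - lam) • h₂ s + lam • φ (Wr (h₂ s) + Win (x₁ s) + b)
        - ((1 - lam) • h₂ s + lam • φ (Wr (h₂ s) + Win (x₂ s) + b))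
        = lam • (φ (Wr (h₂ s) + Win (x₁ s) + b) - φ (Wr (h₂ s) + Win (x₂ s) + b)) := by
      rw [smul_sub]; abel
    rw [hd, norm_smul, Real.norm_eq_abs, abs_of_pos hlam]
    have h1 := hφ (Wr (h₂ s) + Win (x₁ s) + b) (Wr (h₂ s) + Win (x₂ s) + b)
    have h2 : (Wr (h₂ s) + Win (x₁ s) + b) - (Wr (h₂ s) + Win (x₂ s) + b)
        = Win (x₁ s - x₂ s) := by rw [map_sub]; abel
    rw [h2] at h1
    have h3 : ‖Win (x₁ s - x₂ s)‖ ≤ ‖Win‖ * ‖x₁ s - x₂ s‖ := Win.le_opNorm _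
    have h4 : ‖φ (Wr (h₂ s) + Win (x₁ s) + b) - φ (Wr (h₂ s) + Win (x₂ s) + b)‖
        ≤ ‖Win‖ * ‖x₁ s - x₂ s‖ := by
      calc _ ≤ Lphi * ‖Win (x₁ s - x₂ s)‖ := h1
        _ ≤ 1 * ‖Win (x₁ s - x₂ s)‖ := mul_le_mul_of_nonneg_right hL1 (norm_nonneg _)
        _ = ‖Win (x₁ s - x₂ s)‖ := one_mul _
        _ ≤ ‖Win‖ * ‖x₁ s - x₂ s‖ := h3
    calc lam * ‖φ (Wr (h₂ s) + Win (x₁ s) + b) - φ (Wr (h₂ s) + Win (x₂ s) + b)‖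
        ≤ lam * (‖Win‖ * ‖x₁ s - x₂ s‖) := mul_le_mul_of_nonneg_left h4 hlam.le
      _ = B := by rw [hB]; ring
  -- contraction step when inputs agree
  have hcontr : ∀ u, x₁ u = x₂ u →
      ‖h₁ (u + 1) - h₂ (u + 1)‖ ≤ κ * ‖h₁ u - h₂ u‖ := by
    intro u hxu
    rw [hupd₁, hupd₂, hxu]
    have hd : (1 - lam) • h₁ u + lam • φ (Wr (h₁ u) + Win (x₂ u) + b)
        - ((1 - lam) • h₂ u + lam • φ (Wr (h₂ u) + Win (x₂ u) + b))
        = (1 - lam) • (h₁ u - h₂ u)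
          + lam • (φ (Wr (h₁ u) + Win (x₂ u) + b) - φ (Wr (h₂ u) + Win (x₂ u) + b)) := by
      rw [smul_sub, smul_sub]; abel
    rw [hd]
    have h1 := hφ (Wr (h₁ u) + Win (x₂ u) + b) (Wr (h₂ u) + Win (x₂ u) + b)
    have h2 : (Wr (h₁ u) + Win (x₂ u) + b) - (Wr (h₂ u) + Win (x₂ u) + b)
        = Wr (h₁ u - h₂ u) := by rw [map_sub]; abel
    rw [h2] at h1
    have h3 : ‖Wr (h₁ u - h₂ u)‖ ≤ α * ‖h₁ u - h₂ u‖ := by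
      calc ‖Wr (h₁ u - h₂ u)‖ ≤ ‖Wr‖ * ‖h₁ u - h₂ u‖ := Wr.le_opNorm _
        _ ≤ α * ‖h₁ u - h₂ u‖ := mul_le_mul_of_nonneg_right hWr (norm_nonneg _)
    calc ‖(1 - lam) • (h₁ u - h₂ u)
          + lam • (φ (Wr (h₁ u) + Win (x₂ u) + b) - φ (Wr (h₂ u) + Win (x₂ u) + b))‖
        ≤ ‖(1 - lam) • (h₁ u - h₂ u)‖
          + ‖lam • (φ (Wr (h₁ u) + Win (x₂ u) + b) - φ (Wr (h₂ u) + Win (x₂ u) + b))‖ :=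
          norm_add_le _ _
      _ = |1 - lam| * ‖h₁ u - h₂ u‖
          + |lam| * ‖φ (Wr (h₁ u) + Win (x₂ u) + b) - φ (Wr (h₂ u) + Win (x₂ u) + b)‖ := by
          rw [norm_smul, norm_smul, Real.norm_eq_abs, Real.norm_eq_abs]
      _ ≤ κ * ‖h₁ u - h₂ u‖ := by
          rw [abs_of_nonneg (by linarith : (0:ℝ) ≤ 1 - lam), abs_of_pos hlam, hκ]
          have h6 : ‖φ (Wr (h₁ u) + Win (x₂ u) + b) - φ (Wr (h₂ u) + Win (x₂ u) + b)‖
              ≤ Lphi * (α * ‖h₁ u - h₂ u‖) :=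
            h1.trans (mul_le_mul_of_nonneg_left h3 hL0)
          have h7 : lam * ‖φ (Wr (h₁ u) + Win (x₂ u) + b) - φ (Wr (h₂ u) + Win (x₂ u) + b)‖
              ≤ lam * (Lphi * (α * ‖h₁ u - h₂ u‖)) := mul_le_mul_of_nonneg_left h6 hlam.le
          have h8 : (1 - lam) * ‖h₁ u - h₂ u‖ + lam * (Lphi * (α * ‖h₁ u - h₂ u‖))
              = (1 - lam + lam * α * Lphi) * ‖h₁ u - h₂ u‖ := by ring
          linarith
  -- main induction
  have main : ∀ k, ‖h₁ (s + 1 + k) - h₂ (s + 1 + k)‖ ≤ B * κ ^ k := by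
    intro k
    induction k with
    | zero => simpa using hstep1
    | succ n ih =>
      have hne : s + 1 + n ≠ s := by omega
      have hxeq := hx (s + 1 + n) hne
      have := hcontr (s + 1 + n) hxeq
      have hstep : s + 1 + (n + 1) = (s + 1 + n) + 1 := by omega
      rw [hstep]
      calc ‖h₁ ((s + 1 + n) + 1) - h₂ ((s + 1 + n) + 1)‖
          ≤ κ * ‖h₁ (s + 1 + n) - h₂ (s + 1 + n)‖ := this
        _ ≤ κ * (B * κ ^ n) := mul_le_mul_of_nonneg_left ih hκ0
        _ = B * κ ^ (n + 1) := by ring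
  have ht : t = s + 1 + (τ - 1) := by omega
  rw [ht]
  exact main (τ - 1)
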